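/- Let q be a prime power, t a positive integer, and 0 ≤ R1 < 1. Then the asymptotic metric δ⁰_q(t, R1, R1) = limsup_{n→∞} max{ d/n : there exist nested linear codes C2 ⊆ C1 ⊆ F_q^n with t ≤ dim C1 − dim C2, dim C1 ≥ nR1, dim C2 ≤ nR1, and M_t(C1, C2) ≥ d } satisfies δ⁰_q(t, R1, R1) = 1 − R1. -/

import Mathlib

/-- `V_I = {x ∈ F^n : i ∉ I → x i = 0}` -/
noncomputable def VI (F : Type) [Field F] (n : ℕ) (I : Finset (Fin n)) :
    Submodule F (Fin n → F) :=
  Submodule.pi (↑I)ᶜ (fun _ => (⊥ : Submodule F F))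

/-- the `t`-th relative generalized Hamming weight of `C₂ ⊆ C₁ ⊆ F^n` -/
noncomputable def RGHW (F : Type) [Field F] {n : ℕ} (t : ℕ)
    (C₁ C₂ : Submodule F (Fin n → F)) : ℕ :=
  sInf {d : ℕ | ∃ I : Finset (Fin n), I.card = d ∧
    Module.finrank F ↥(C₁ ⊓ VI F n I) ≥ Module.finrank F ↥(C₂ ⊓ VI F n I) + t}

/-- `π(q) = ∏_{i=1}^∞ (1 - q^{-i})` -/
noncomputable def piq (q : ℝ) : ℝ := ∏' i : ℕ, (1 - (q ^ (i + 1))⁻¹)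

/-- `N₁(w,u) = ∏_{i=0}^{u-1}(q^w - q^i) / ∏_{i=0}^{u-1}(q^u - q^i)` -/
noncomputable def N1 (q : ℝ) (w u : ℕ) : ℝ :=
  (∏ i ∈ Finset.range u, (q ^ w - q ^ i)) / (∏ i ∈ Finset.range u, (q ^ u - q ^ i))

/-- `N₂(w,u,v) = ∏_{i=0}^{v-1}(q^w - q^{u+i}) / ∏_{i=0}^{v-1}(q^v - q^i)` -/
noncomputable def N2 (q : ℝ) (w u v : ℕ) : ℝ :=
  (∏ i ∈ Finset.range v, (q ^ w - q ^ (u + i))) / (∏ i ∈ Finset.range v, (q ^ v - q ^ i))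

/-- `N₃(w,u,v,a) = N₁(u,a) · N₂(w-a, u-a, v-a)` -/
noncomputable def N3 (q : ℝ) (w u v a : ℕ) : ℝ :=
  N1 q u a * N2 q (w - a) (u - a) (v - a)

variable {F : Type} [Field F] {n : ℕ}

lemma mem_VI {I : Finset (Fin n)} {x : Fin n → F} :
    x ∈ VI F n I ↔ ∀ i, i ∉ I → x i = 0 := by
  simp [VI, Submodule.mem_pi]

lemma VI_mono {I I' : Finset (Fin n)} (h : I ⊆ I') : VI F n I ≤ VI F n I' := by
  intro x hx
  rw [mem_VI] at *
  exact fun i hi => hx i (fun hiI => hi (h hiI))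

lemma VI_univ : VI F n Finset.univ = ⊤ := by
  ext x; simp [mem_VI]

lemma VI_inf_VI (K I : Finset (Fin n)) : VI F n K ⊓ VI F n I = VI F n (K ∩ I) := by
  ext x
  simp only [Submodule.mem_inf, mem_VI, Finset.mem_inter]
  constructor
  · rintro ⟨h1, h2⟩ i hi
    by_cases hK : i ∈ K
    · exact h2 i (fun hI => hi ⟨hK, hI⟩)
    · exact h1 i hK
  · intro h
    exact ⟨fun i hi => h i (fun ⟨a, _⟩ => hi a), fun i hi => h i (fun ⟨_, b⟩ => hi b)⟩

/-- linear equiv between VI and functions on I -/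
noncomputable def VIequiv (I : Finset (Fin n)) : (VI F n I) ≃ₗ[F] (I → F) where
  toFun x := fun i => x.1 i.1
  map_add' x y := rfl
  map_smul' c x := rfl
  invFun f := ⟨fun i => if h : i ∈ I then f ⟨i, h⟩ else 0, by
    rw [mem_VI]; intro i hi; simp [hi]⟩
  left_inv := by
    rintro ⟨x, hx⟩
    ext i
    by_cases h : i ∈ I
    · simp [h]
    · simp [h, (mem_VI.1 hx) i h]
  right_inv := by
    intro f; ext i; simp [i.2]

lemma finrank_VI (I : Finset (Fin n)) : Module.finrank F (VI F n I) = I.card := by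
  rw [(VIequiv I).finrank_eq]
  simp [Module.finrank_pi]

open Module

lemma VI_empty : VI F n (∅ : Finset (Fin n)) = ⊥ := by
  ext x; simp [mem_VI]
  constructor
  · intro h; funext i; exact h i
  · intro h i; simp [h]

/-- existence of a small "information set" for C2 -/
lemma exists_info_set (C2 : Submodule F (Fin n → F)) :
    ∃ J : Finset (Fin n), J.card ≤ finrank F C2 ∧ C2 ⊓ VI F n Jᶜ = ⊥ := by
  classical
  set S : Set ℕ := {m | ∃ J : Finset (Fin n), J.card = m ∧ C2 ⊓ VI F n Jᶜ = ⊥} with hS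
  have hne : S.Nonempty := by
    refine ⟨(Finset.univ : Finset (Fin n)).card, Finset.univ, rfl, ?_⟩
    rw [Finset.compl_univ, VI_empty, inf_bot_eq]
  obtain ⟨J, hJcard, hJ⟩ := Nat.sInf_mem hne
  refine ⟨J, ?_, hJ⟩
  by_contra hlt
  push_neg at hlt
  -- for each j ∈ J, erasing j breaks the property
  have hx : ∀ j ∈ J, ∃ x : Fin n → F, x ∈ C2 ∧ x ∈ VI F n (J.erase j)ᶜ ∧ x ≠ 0 := by
    intro j hj
    have hnot : ¬ (C2 ⊓ VI F n (J.erase j)ᶜ = ⊥) := by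
      intro hcontra
      have : (J.erase j).card ∈ S := ⟨J.erase j, rfl, hcontra⟩
      have hle := Nat.sInf_le this
      rw [← hJcard] at hle
      rw [Finset.card_erase_of_mem hj] at hle
      omega
    rw [Submodule.eq_bot_iff] at hnot
    push_neg at hnot
    obtain ⟨x, hxmem, hxne⟩ := hnot
    exact ⟨x, (Submodule.mem_inf.1 hxmem).1, (Submodule.mem_inf.1 hxmem).2, hxne⟩
  choose xf hx1 hx2 hx3 using hx
  -- diagonal entries nonzero
  have hdiag : ∀ (j : Fin n) (hj : j ∈ J), xf j hj j ≠ 0 := by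
    intro j hj hzero
    have : xf j hj ∈ C2 ⊓ VI F n Jᶜ := by
      refine Submodule.mem_inf.2 ⟨hx1 j hj, ?_⟩
      rw [mem_VI]
      intro i hi
      simp only [Finset.mem_compl, not_not] at hi
      by_cases hij : i = j
      · subst hij; exact hzero
      · exact (mem_VI.1 (hx2 j hj)) i (by simp [Finset.mem_compl, Finset.mem_erase, hij, hi])
    rw [hJ] at this
    exact hx3 j hj (by simpa using this)
  -- linear independence
  have hli : LinearIndependent F (fun j : {x // x ∈ J} => (⟨xf j.1 j.2, hx1 j.1 j.2⟩ : C2)) := by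
    rw [Fintype.linearIndependent_iff]
    intro g hsum j0
    have hcoord : ∑ j : {x // x ∈ J}, g j • xf j.1 j.2 = 0 := by
      have := congrArg (Subtype.val) hsum
      simpa using this
    have := congrFun hcoord j0.1
    simp only [Finset.sum_apply, Pi.smul_apply, smul_eq_mul, Pi.zero_apply] at this
    rw [Finset.sum_eq_single j0] at this
    · rcases mul_eq_zero.1 this with h | h
      · exact h
      · exact absurd h (hdiag j0.1 j0.2)
    · intro j _ hne
      have hzero : xf j.1 j.2 j0.1 = 0 := by
        refine (mem_VI.1 (hx2 j.1 j.2)) j0.1 ?_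
        simp only [Finset.mem_compl, not_not, Finset.mem_erase]
        exact ⟨fun h => hne (Subtype.ext h.symm), j0.2⟩
      simp [hzero]
    · intro h; exact absurd (Finset.mem_univ j0) h
  have := hli.fintype_card_le_finrank
  rw [Fintype.card_coe] at this
  omega

lemma finrank_inf_VI_compl_ge (C1 : Submodule F (Fin n → F)) (J : Finset (Fin n)) :
    finrank F C1 ≤ finrank F (C1 ⊓ VI F n Jᶜ : Submodule F (Fin n → F)) + J.card := by
  classical
  let φ : C1 →ₗ[F] ({x // x ∈ J} → F) :=
    { toFun := fun x j => x.1 j.1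
      map_add' := fun x y => rfl
      map_smul' := fun c x => rfl }
  have hker : LinearMap.ker φ = Submodule.comap C1.subtype (VI F n Jᶜ) := by
    ext x
    simp only [LinearMap.mem_ker, Submodule.mem_comap, Submodule.coe_subtype, mem_VI, φ]
    constructor
    · intro h i hi
      simp only [Finset.mem_compl, not_not] at hi
      exact congrFun h ⟨i, hi⟩
    · intro h
      funext j
      exact h j.1 (by simp [j.2])
  have hcomap : Submodule.comap C1.subtype (VI F n Jᶜ) =
      Submodule.comap C1.subtype (C1 ⊓ VI F n Jᶜ) := by
    rw [Submodule.comap_inf, Submodule.comap_subtype_self, top_inf_eq]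
  have hkerrank : finrank F (LinearMap.ker φ) =
      finrank F (C1 ⊓ VI F n Jᶜ : Submodule F (Fin n → F)) := by
    rw [hker, hcomap]
    exact (Submodule.comapSubtypeEquivOfLe inf_le_left).finrank_eq
  have hrn := LinearMap.finrank_range_add_finrank_ker φ
  have hrange : finrank F (LinearMap.range φ) ≤ J.card := by
    have := Submodule.finrank_le (LinearMap.range φ)
    rwa [Module.finrank_pi, Fintype.card_coe] at this
  omega

lemma RGHW_le (t : ℕ) (C1 C2 : Submodule F (Fin n → F)) (h12 : C2 ≤ C1)
    (hdiff : finrank F C2 + t ≤ finrank F C1) :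
    RGHW F t C1 C2 ≤ n - (finrank F C1 - t) := by
  classical
  obtain ⟨J0, hJ0card, hJ0⟩ := exists_info_set C2
  have hk1n : finrank F C1 ≤ n := by
    have := Submodule.finrank_le C1
    rwa [Module.finrank_pi, Fintype.card_fin] at this
  obtain ⟨J, hJ0J, hJcard⟩ := Finset.exists_superset_card_eq
    (n := finrank F C1 - t) (s := J0) (by omega) (by rw [Fintype.card_fin]; omega)
  have hC2bot : C2 ⊓ VI F n Jᶜ = ⊥ := by
    rw [← le_bot_iff, ← hJ0]
    exact inf_le_inf_left _ (VI_mono (Finset.compl_subset_compl.2 hJ0J))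
  have hC1rank := finrank_inf_VI_compl_ge C1 J
  have hmem : (Jᶜ.card) ∈ {d : ℕ | ∃ I : Finset (Fin n), I.card = d ∧
      finrank F ↥(C1 ⊓ VI F n I) ≥ finrank F ↥(C2 ⊓ VI F n I) + t} := by
    refine ⟨Jᶜ, rfl, ?_⟩
    rw [hC2bot, finrank_bot]
    rw [hJcard] at hC1rank
    omega
  have := Nat.sInf_le hmem
  rwa [Finset.card_compl, Fintype.card_fin, hJcard] at this

lemma construction (t : ℕ) (ht : 1 ≤ t) (K K' : Finset (Fin n)) (hKK' : K ⊆ K')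
    (hcard : K'.card = K.card + (t - 1)) (hK'n : K'.card < n) :
    ∃ C1 C2 : Submodule F (Fin n → F), C2 ≤ C1 ∧
      finrank F C2 = K.card ∧ finrank F C1 = K.card + t ∧
      n - K.card ≤ RGHW F t C1 C2 := by
  classical
  set s : ℕ := t - 1 with hs
  set v : Fin n → F := fun i => if i ∈ K' then 0 else 1 with hv
  set C2 : Submodule F (Fin n → F) := VI F n K with hC2
  set C1 : Submodule F (Fin n → F) := VI F n K' ⊔ Submodule.span F {v} with hC1
  have hvne : v ≠ 0 := by
    obtain ⟨p, hp⟩ : ∃ p, p ∉ K' := by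
      by_contra hno
      push_neg at hno
      have : (Finset.univ : Finset (Fin n)) ⊆ K' := fun i _ => hno i
      have := Finset.card_le_card this
      simp [Fintype.card_fin] at this
      omega
    intro h
    have := congrFun h p
    simp [hv, hp] at this
  have hmemC1 : ∀ x ∈ C1, ∃ (u : Fin n → F) (c : F), u ∈ VI F n K' ∧ x = u + c • v := by
    intro x hx
    rw [hC1, Submodule.mem_sup] at hx
    obtain ⟨u, hu, z, hz, hx⟩ := hx
    obtain ⟨c, hc⟩ := Submodule.mem_span_singleton.1 hz
    exact ⟨u, c, hu, by rw [← hx, ← hc]⟩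
  -- dimension of C1
  have hinfbot : VI F n K' ⊓ Submodule.span F {v} = ⊥ := by
    rw [eq_bot_iff]
    intro x hx
    obtain ⟨h1, h2⟩ := Submodule.mem_inf.1 hx
    obtain ⟨c, hc⟩ := Submodule.mem_span_singleton.1 h2
    obtain ⟨p, hp⟩ : ∃ p, p ∉ K' := by
      by_contra hno
      push_neg at hno
      have : (Finset.univ : Finset (Fin n)) ⊆ K' := fun i _ => hno i
      have := Finset.card_le_card this
      simp [Fintype.card_fin] at this
      omega
    have hxp : x p = 0 := mem_VI.1 h1 p hp
    have : c = 0 := by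
      rw [← hc] at hxp
      simpa [hv, hp] using hxp
    simp only [Submodule.mem_bot]
    rw [← hc, this, zero_smul]
  have hrank1 : finrank F C1 = K'.card + 1 := by
    have := Submodule.finrank_sup_add_finrank_inf_eq (VI F n K') (Submodule.span F {v})
    rw [hinfbot, finrank_bot, finrank_VI, finrank_span_singleton hvne] at this
    rw [hC1]
    omega
  refine ⟨C1, C2, le_trans (VI_mono hKK') le_sup_left, finrank_VI K, by rw [hrank1, hcard]; omega, ?_⟩
  -- lower bound for RGHW
  refine le_csInf ?_ ?_
  · refine ⟨(Finset.univ : Finset (Fin n)).card, Finset.univ, rfl, ?_⟩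
    rw [VI_univ, inf_top_eq, inf_top_eq, hrank1, finrank_VI, hcard]
    omega
  · rintro d ⟨I, hIcard, hI⟩
    -- rewrite C2 ⊓ VI I
    have hC2I : C2 ⊓ VI F n I = VI F n (K ∩ I) := VI_inf_VI K I
    rw [hC2I, finrank_VI] at hI
    have hsub1 : K'ᶜ ⊆ I := by
      by_contra hno
      obtain ⟨p, hpK', hpI⟩ : ∃ p, p ∉ K' ∧ p ∉ I := by
        rw [Finset.subset_iff] at hno
        push_neg at hno
        obtain ⟨p, hp1, hp2⟩ := hno
        exact ⟨p, Finset.mem_compl.1 hp1, hp2⟩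
      have hle : C1 ⊓ VI F n I ≤ VI F n (K' ∩ I) := by
        intro x hx
        obtain ⟨hx1, hx2⟩ := Submodule.mem_inf.1 hx
        obtain ⟨u, c, hu, hxuc⟩ := hmemC1 x hx1
        have hxp : x p = 0 := mem_VI.1 hx2 p hpI
        have hc0 : c = 0 := by
          rw [hxuc] at hxp
          have hup : u p = 0 := mem_VI.1 hu p hpK'
          simpa [hup, hv, hpK'] using hxp
        have hxu : x = u := by rw [hxuc, hc0, zero_smul, add_zero]
        rw [← VI_inf_VI]
        exact Submodule.mem_inf.2 ⟨hxu ▸ hu, hx2⟩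
      have hfr := Submodule.finrank_mono hle
      rw [finrank_VI] at hfr
      have hcardle : (K' ∩ I).card ≤ (K ∩ I).card + s := by
        have hsubs : K' ∩ I ⊆ (K ∩ I) ∪ (K' \ K) := by
          intro i hi
          obtain ⟨hi1, hi2⟩ := Finset.mem_inter.1 hi
          by_cases hiK : i ∈ K
          · exact Finset.mem_union_left _ (Finset.mem_inter.2 ⟨hiK, hi2⟩)
          · exact Finset.mem_union_right _ (Finset.mem_sdiff.2 ⟨hi1, hiK⟩)
        have h1 := Finset.card_le_card hsubs
        have h2 := Finset.card_union_le (K ∩ I) (K' \ K)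
        have h3 : (K' \ K).card = s := by
          rw [Finset.card_sdiff_of_subset hKK', hcard]
          omega
        omega
      omega
    have hsub2 : K' \ K ⊆ I := by
      by_contra hno
      obtain ⟨p, hpKK, hpI⟩ : ∃ p, p ∈ K' \ K ∧ p ∉ I := by
        rw [Finset.subset_iff] at hno
        push_neg at hno
        exact hno
      have hle : C1 ⊓ VI F n I ≤ VI F n (K' ∩ I) ⊔ Submodule.span F {v} := by
        intro x hx
        obtain ⟨hx1, hx2⟩ := Submodule.mem_inf.1 hx
        obtain ⟨u, c, hu, hxuc⟩ := hmemC1 x hx1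
        have huI : u ∈ VI F n (K' ∩ I) := by
          rw [mem_VI]
          intro i hi
          rw [Finset.mem_inter] at hi
          push_neg at hi
          by_cases hiK' : i ∈ K'
          · have hiI : i ∉ I := hi hiK'
            have hxi : x i = 0 := mem_VI.1 hx2 i hiI
            rw [hxuc] at hxi
            simpa [hv, hiK'] using hxi
          · exact mem_VI.1 hu i hiK'
        rw [hxuc]
        exact Submodule.add_mem_sup huI (Submodule.smul_mem _ c (Submodule.mem_span_singleton_self v))
      have hfr := Submodule.finrank_mono hle
      have hsup := Submodule.finrank_sup_add_finrank_inf_eq (VI F n (K' ∩ I))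
        (Submodule.span F {v})
      rw [finrank_VI, finrank_span_singleton hvne] at hsup
      have hps : 1 ≤ s := by
        have : (K' \ K).Nonempty := ⟨p, hpKK⟩
        have hcard' : (K' \ K).card = s := by
          rw [Finset.card_sdiff_of_subset hKK', hcard]; omega
        have := Finset.card_pos.2 this
        omega
      have hcardle : (K' ∩ I).card ≤ (K ∩ I).card + (s - 1) := by
        have hsubs : K' ∩ I ⊆ (K ∩ I) ∪ ((K' \ K).erase p) := by
          intro i hi
          obtain ⟨hi1, hi2⟩ := Finset.mem_inter.1 hi
          by_cases hiK : i ∈ K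
          · exact Finset.mem_union_left _ (Finset.mem_inter.2 ⟨hiK, hi2⟩)
          · refine Finset.mem_union_right _ (Finset.mem_erase.2 ⟨?_, Finset.mem_sdiff.2 ⟨hi1, hiK⟩⟩)
            intro h
            exact hpI (h ▸ hi2)
        have h1 := Finset.card_le_card hsubs
        have h2 := Finset.card_union_le (K ∩ I) ((K' \ K).erase p)
        have h3 : (K' \ K).card = s := by
          rw [Finset.card_sdiff_of_subset hKK', hcard]; omega
        have h4 := Finset.card_erase_of_mem hpKK
        omega
      omega
    -- conclude
    have hdisj : Disjoint K'ᶜ (K' \ K) := by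
      rw [Finset.disjoint_left]
      intro a ha hb
      exact (Finset.mem_compl.1 ha) (Finset.mem_sdiff.1 hb).1
    have hunion : K'ᶜ ∪ (K' \ K) ⊆ I := Finset.union_subset hsub1 hsub2
    have hcardI := Finset.card_le_card hunion
    rw [Finset.card_union_of_disjoint hdisj, Finset.card_compl, Fintype.card_fin,
      Finset.card_sdiff_of_subset hKK'] at hcardI
    omega

lemma elem_le {t : ℕ} {R1 : ℝ} (hn : 1 ≤ n) (r : ℝ)
    (hr : ∃ (d : ℕ) (C₁ C₂ : Submodule F (Fin n → F)), C₂ ≤ C₁ ∧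
          t ≤ Module.finrank F C₁ - Module.finrank F C₂ ∧
          (Module.finrank F C₁ : ℝ) ≥ (n : ℝ) * R1 ∧
          (Module.finrank F C₂ : ℝ) ≤ (n : ℝ) * R1 ∧
          RGHW F t C₁ C₂ ≥ d ∧ r = (d : ℝ) / n) :
    r ≤ 1 - R1 + t / n := by
  obtain ⟨d, C1, C2, h12, hdiff, hk1, _hk2, hd, hreq⟩ := hr
  have hk2k1 : finrank F C2 ≤ finrank F C1 := Submodule.finrank_mono h12
  have hk1n : finrank F C1 ≤ n := by
    have := Submodule.finrank_le C1
    rwa [Module.finrank_pi, Fintype.card_fin] at this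
  have htk1 : t ≤ finrank F C1 := by omega
  have hsing := RGHW_le t C1 C2 h12 (by omega)
  have hdn : d ≤ n - (finrank F C1 - t) := le_trans hd hsing
  have hn0 : (0:ℝ) < n := by exact_mod_cast hn
  have hdr : (d:ℝ) ≤ (n:ℝ) - (n:ℝ) * R1 + t := by
    have h1 : (d:ℝ) ≤ ((n - (finrank F C1 - t) : ℕ) : ℝ) := by exact_mod_cast hdn
    have h2 : ((n - (finrank F C1 - t) : ℕ) : ℝ) =
        (n:ℝ) - (finrank F C1 : ℝ) + t := by
      have hle : finrank F C1 - t ≤ n := by omega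
      rw [Nat.cast_sub hle, Nat.cast_sub htk1]
      ring
    rw [h2] at h1
    linarith
  rw [hreq, div_le_iff₀ hn0]
  have : (1 - R1 + (t:ℝ) / n) * n = (n:ℝ) - (n:ℝ) * R1 + t := by
    field_simp
  rw [this]
  exact hdr


/-- Theorem 4, Eq. (14): `δ⁰_q(t, R₁, R₁) = 1 - R₁`. -/
theorem delta0_eq (F : Type) [Field F] [Fintype F]
    (t : ℕ) (ht : 1 ≤ t) (R1 : ℝ) (hR10 : 0 ≤ R1) (hR11 : R1 < 1) :
    Filter.limsup (fun n : ℕ =>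
        sSup {r : ℝ | ∃ (d : ℕ) (C₁ C₂ : Submodule F (Fin n → F)), C₂ ≤ C₁ ∧
          t ≤ Module.finrank F C₁ - Module.finrank F C₂ ∧
          (Module.finrank F C₁ : ℝ) ≥ (n : ℝ) * R1 ∧
          (Module.finrank F C₂ : ℝ) ≤ (n : ℝ) * R1 ∧
          RGHW F t C₁ C₂ ≥ d ∧ r = (d : ℝ) / n})
      Filter.atTop = 1 - R1 := by
  classical
  set a : ℕ → ℝ := fun n =>
    sSup {r : ℝ | ∃ (d : ℕ) (C₁ C₂ : Submodule F (Fin n → F)), C₂ ≤ C₁ ∧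
          t ≤ Module.finrank F C₁ - Module.finrank F C₂ ∧
          (Module.finrank F C₁ : ℝ) ≥ (n : ℝ) * R1 ∧
          (Module.finrank F C₂ : ℝ) ≤ (n : ℝ) * R1 ∧
          RGHW F t C₁ C₂ ≥ d ∧ r = (d : ℝ) / n} with ha
  have hR1pos : 0 < 1 - R1 := by linarith
  -- upper bound
  have hupper : ∀ n : ℕ, 1 ≤ n → a n ≤ 1 - R1 + t / n := by
    intro n hn
    apply Real.sSup_le
    · intro r hr
      exact elem_le hn r hr
    · have : (0:ℝ) ≤ (t:ℝ)/n := by positivity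
      linarith
  -- lower bound
  have hlower : ∀ n : ℕ, 1 ≤ n → ⌊(n:ℝ) * R1⌋₊ + t ≤ n → 1 - R1 ≤ a n := by
    intro n hn1 hn2
    set k2 : ℕ := ⌊(n:ℝ) * R1⌋₊ with hk2
    have hn0 : (0:ℝ) < n := by exact_mod_cast hn1
    obtain ⟨K', _hK'univ, hK'card⟩ := Finset.exists_subset_card_eq
      (s := (Finset.univ : Finset (Fin n))) (n := k2 + (t-1))
      (by simp [Fintype.card_fin]; omega)
    obtain ⟨K, hKK', hKcard⟩ := Finset.exists_subset_card_eq
      (s := K') (n := k2) (by omega)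
    obtain ⟨C1, C2, h12, hfr2, hfr1, hRG⟩ := construction (F := F) t ht K K' hKK'
      (by omega) (by omega)
    have hk2R : (k2:ℝ) ≤ (n:ℝ) * R1 := Nat.floor_le (by positivity)
    have hk2R' : (n:ℝ) * R1 < (k2:ℝ) + 1 := Nat.lt_floor_add_one _
    have hmem : ((↑(n - k2) : ℝ) / n) ∈ {r : ℝ | ∃ (d : ℕ)
        (C₁ C₂ : Submodule F (Fin n → F)), C₂ ≤ C₁ ∧
          t ≤ Module.finrank F C₁ - Module.finrank F C₂ ∧
          (Module.finrank F C₁ : ℝ) ≥ (n : ℝ) * R1 ∧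
          (Module.finrank F C₂ : ℝ) ≤ (n : ℝ) * R1 ∧
          RGHW F t C₁ C₂ ≥ d ∧ r = (d : ℝ) / n} := by
      refine ⟨n - k2, C1, C2, h12, ?_, ?_, ?_, ?_, rfl⟩
      · rw [hfr1, hfr2, hKcard]; omega
      · rw [hfr1, hKcard]
        have ht1 : (1:ℝ) ≤ (t:ℝ) := by exact_mod_cast ht
        push_cast
        linarith
      · rw [hfr2, hKcard]; exact hk2R
      · rw [hKcard] at hRG; exact hRG
    have hbdd : BddAbove {r : ℝ | ∃ (d : ℕ)
        (C₁ C₂ : Submodule F (Fin n → F)), C₂ ≤ C₁ ∧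
          t ≤ Module.finrank F C₁ - Module.finrank F C₂ ∧
          (Module.finrank F C₁ : ℝ) ≥ (n : ℝ) * R1 ∧
          (Module.finrank F C₂ : ℝ) ≤ (n : ℝ) * R1 ∧
          RGHW F t C₁ C₂ ≥ d ∧ r = (d : ℝ) / n} :=
      ⟨1 - R1 + t / n, fun r hr => elem_le hn1 r hr⟩
    have hle := le_csSup hbdd hmem
    refine le_trans ?_ hle
    rw [le_div_iff₀ hn0]
    have hcast : ((↑(n - k2) : ℝ)) = (n:ℝ) - k2 := by
      have : k2 ≤ n := by omega
      exact Nat.cast_sub this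
    rw [hcast]
    nlinarith
  -- squeeze
  have hN : ∃ N : ℕ, ∀ n ≥ N, 1 ≤ n ∧ ⌊(n:ℝ) * R1⌋₊ + t ≤ n := by
    refine ⟨max 1 (⌈(t:ℝ) / (1 - R1)⌉₊ + 1), fun n hn => ?_⟩
    have hn1 : 1 ≤ n := le_trans (le_max_left _ _) hn
    refine ⟨hn1, ?_⟩
    have hn2 : (⌈(t:ℝ) / (1 - R1)⌉₊ : ℝ) ≤ (n:ℝ) := by
      have : ⌈(t:ℝ) / (1 - R1)⌉₊ ≤ n := le_trans (by omega) (le_trans (le_max_right _ _) hn)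
      exact_mod_cast this
    have htn : (t:ℝ) / (1 - R1) ≤ (n:ℝ) := le_trans (Nat.le_ceil _) hn2
    have htn' : (t:ℝ) ≤ (n:ℝ) * (1 - R1) := by
      rw [div_le_iff₀ hR1pos] at htn
      linarith
    have hfl : (⌊(n:ℝ) * R1⌋₊ : ℝ) + t ≤ (n:ℝ) := by
      have := Nat.floor_le (show (0:ℝ) ≤ (n:ℝ) * R1 by positivity)
      nlinarith
    exact_mod_cast hfl
  obtain ⟨N, hNprop⟩ := hN
  have htend : Filter.Tendsto a Filter.atTop (nhds (1 - R1)) := by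
    have hg : Filter.Tendsto (fun n : ℕ => 1 - R1 + (t:ℝ) / n)
        Filter.atTop (nhds (1 - R1)) := by
      have := (tendsto_const_nhds (x := (1 - R1 : ℝ)) (f := Filter.atTop (α := ℕ))).add
        (tendsto_const_div_atTop_nhds_zero_nat (t:ℝ))
      simpa using this
    refine tendsto_of_tendsto_of_tendsto_of_le_of_le'
      (tendsto_const_nhds) hg ?_ ?_
    · filter_upwards [Filter.eventually_ge_atTop N] with n hn
      obtain ⟨h1, h2⟩ := hNprop n hn
      exact hlower n h1 h2
    · filter_upwards [Filter.eventually_ge_atTop 1] with n hn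
      exact hupper n hn
  exact htend.limsup_eq
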